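/- arXiv:math/0310398 — 3 statements merged into one kernel-verified Lean document; each statement's English description precedes it below -/
import Mathlib

section
/- For every 2×2-matrix-valued function F holomorphic on some open neighborhood of X, there exists ρ > 0 such that the function (z, w) ↦ I₂ − ρ² F(z) F(w)* belongs to the cone 𝒞. -/
noncomputable section

open scoped ComplexConjugate Matrix

/-- The open unit disk with two closed disks (centered at `c₁`, `c₂` on the real axis,
with radii `r₁`, `r₂`) removed. -/
def Rdom (c₁ c₂ r₁ r₂ : ℝ) : Set ℂ :=
  {z : ℂ | ‖z‖ < 1 ∧ r₁ < ‖z - (c₁ : ℂ)‖ ∧ r₂ < ‖z - (c₂ : ℂ)‖}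

/-- The boundary `B = B₀ ∪ B₁ ∪ B₂` of `Rdom`. -/
def Bbnd (c₁ c₂ r₁ r₂ : ℝ) : Set ℂ :=
  {z : ℂ | ‖z‖ = 1} ∪ {z : ℂ | ‖z - (c₁ : ℂ)‖ = r₁} ∪
    {z : ℂ | ‖z - (c₂ : ℂ)‖ = r₂}

/-- The closure `X = R ∪ B`. -/
def Xcl (c₁ c₂ r₁ r₂ : ℝ) : Set ℂ := Rdom c₁ c₂ r₁ r₂ ∪ Bbnd c₁ c₂ r₁ r₂

/-- The standing assumptions on the parameters. -/
def GoodParams (c₁ c₂ r₁ r₂ : ℝ) : Prop :=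
  -1 < c₁ ∧ c₁ < 0 ∧ 0 < c₂ ∧ c₂ < 1 ∧
    0 < r₁ ∧ r₁ < min |c₁| (1 - |c₁|) ∧ 0 < r₂ ∧ r₂ < min |c₂| (1 - |c₂|)

/-- Membership in the cone `𝒞`: on `R × R`, `Γ` is a finite sum of terms
`H(z)(1 − ψ(z) conj(ψ(w))) H(w)*` where `ψ` is scalar holomorphic on a neighborhood of `X` with
`|ψ| ≤ 1` on `X`, and `H` is a `2×2`-matrix-valued function holomorphic on a neighborhood of `X`. -/
def InCone (c₁ c₂ r₁ r₂ : ℝ) (Γ : ℂ → ℂ → Matrix (Fin 2) (Fin 2) ℂ) : Prop :=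
  ∃ (n : ℕ) (ψ : Fin n → ℂ → ℂ) (F : Fin n → ℂ → Matrix (Fin 2) (Fin 2) ℂ),
    (∀ i : Fin n, ∃ U : Set ℂ, IsOpen U ∧ Xcl c₁ c₂ r₁ r₂ ⊆ U ∧ DifferentiableOn ℂ (ψ i) U) ∧
    (∀ i : Fin n, ∀ z ∈ Xcl c₁ c₂ r₁ r₂, ‖ψ i z‖ ≤ 1) ∧
    (∀ i : Fin n, ∃ U : Set ℂ, IsOpen U ∧ Xcl c₁ c₂ r₁ r₂ ⊆ U ∧
      ∀ j k : Fin 2, DifferentiableOn ℂ (fun z => F i z j k) U) ∧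
    ∀ z ∈ Rdom c₁ c₂ r₁ r₂, ∀ w ∈ Rdom c₁ c₂ r₁ r₂,
      Γ z w = ∑ i : Fin n, (1 - ψ i z * (starRingEnd ℂ) (ψ i w)) • (F i z * (F i w)ᴴ)

/-- `X` is a compact subset of `ℂ`. -/
lemma isCompact_Xcl (c₁ c₂ r₁ r₂ : ℝ) : IsCompact (Xcl c₁ c₂ r₁ r₂) := by
  have hc1 : Continuous fun z : ℂ => ‖z - (c₁ : ℂ)‖ :=
    continuous_norm.comp (continuous_id.sub continuous_const)
  have hc2 : Continuous fun z : ℂ => ‖z - (c₂ : ℂ)‖ :=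
    continuous_norm.comp (continuous_id.sub continuous_const)
  have hT : IsClosed {z : ℂ | ‖z‖ ≤ 1 ∧ r₁ ≤ ‖z - (c₁ : ℂ)‖ ∧
      r₂ ≤ ‖z - (c₂ : ℂ)‖} := by
    refine IsClosed.inter (isClosed_le continuous_norm continuous_const) ?_
    exact IsClosed.inter (isClosed_le continuous_const hc1) (isClosed_le continuous_const hc2)
  have hB : IsClosed (Bbnd c₁ c₂ r₁ r₂) := by
    refine IsClosed.union (IsClosed.union ?_ ?_) ?_
    · exact isClosed_eq continuous_norm continuous_const
    · exact isClosed_eq hc1 continuous_const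
    · exact isClosed_eq hc2 continuous_const
  have hEq : Xcl c₁ c₂ r₁ r₂ = {z : ℂ | ‖z‖ ≤ 1 ∧ r₁ ≤ ‖z - (c₁ : ℂ)‖ ∧
      r₂ ≤ ‖z - (c₂ : ℂ)‖} ∪ Bbnd c₁ c₂ r₁ r₂ := by
    ext z
    constructor
    · rintro (⟨h1, h2, h3⟩ | hb)
      · exact Or.inl ⟨h1.le, h2.le, h3.le⟩
      · exact Or.inr hb
    · rintro (⟨h1, h2, h3⟩ | hb)
      · rcases h1.lt_or_eq with h1' | h1'
        · rcases h2.lt_or_eq with h2' | h2'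
          · rcases h3.lt_or_eq with h3' | h3'
            · exact Or.inl ⟨h1', h2', h3'⟩
            · exact Or.inr (Or.inr h3'.symm)
          · exact Or.inr (Or.inl (Or.inr h2'.symm))
        · exact Or.inr (Or.inl (Or.inl h1'))
      · exact Or.inr hb
  rw [hEq]
  have hsub : {z : ℂ | ‖z‖ ≤ 1 ∧ r₁ ≤ ‖z - (c₁ : ℂ)‖ ∧
      r₂ ≤ ‖z - (c₂ : ℂ)‖} ∪ Bbnd c₁ c₂ r₁ r₂ ⊆
      Metric.closedBall (0 : ℂ) (1 + |c₁| + |r₁| + |c₂| + |r₂|) := by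
    have h01 : (0:ℝ) ≤ |c₁| := abs_nonneg _
    have h02 : (0:ℝ) ≤ |c₂| := abs_nonneg _
    have h03 : (0:ℝ) ≤ |r₁| := abs_nonneg _
    have h04 : (0:ℝ) ≤ |r₂| := abs_nonneg _
    rintro z (⟨h1, _, _⟩ | ((hh | hh) | hh)) <;>
      simp only [Metric.mem_closedBall, Complex.dist_eq, sub_zero]
    · linarith
    · linarith [hh.le]
    · have habs : ‖z‖ ≤ ‖z - (c₁:ℂ)‖ + ‖(c₁:ℂ)‖ := by
        simpa using norm_add_le (z - (c₁:ℂ)) (c₁:ℂ)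
      have h3 : ‖(c₁:ℂ)‖ = |c₁| := by simp
      have hr : r₁ ≤ |r₁| := le_abs_self r₁
      rw [hh] at habs
      linarith
    · have habs : ‖z‖ ≤ ‖z - (c₂:ℂ)‖ + ‖(c₂:ℂ)‖ := by
        simpa using norm_add_le (z - (c₂:ℂ)) (c₂:ℂ)
      have h3 : ‖(c₂:ℂ)‖ = |c₂| := by simp
      have hr : r₂ ≤ |r₂| := le_abs_self r₂
      rw [hh] at habs
      linarith
  exact (isCompact_closedBall (0:ℂ) _).of_isClosed_subset (hT.union hB) hsub

/-- For every `2×2`-matrix-valued function `F` holomorphic on a neighborhood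
of `X`, there exists `ρ > 0` such that `I − ρ²F(z)F(w)*` belongs to the cone `𝒞`. -/
theorem cone_absorbing (c₁ c₂ r₁ r₂ : ℝ) (h : GoodParams c₁ c₂ r₁ r₂)
    (F : ℂ → Matrix (Fin 2) (Fin 2) ℂ)
    (hF : ∃ U : Set ℂ, IsOpen U ∧ Xcl c₁ c₂ r₁ r₂ ⊆ U ∧
      ∀ j k : Fin 2, DifferentiableOn ℂ (fun z => F z j k) U) :
    ∃ ρ : ℝ, 0 < ρ ∧
      InCone c₁ c₂ r₁ r₂ (fun z w => 1 - ((ρ : ℂ) ^ 2) • (F z * (F w)ᴴ)) := by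
  obtain ⟨U, hUo, hXU, hd⟩ := hF
  have hXcomp : IsCompact (Xcl c₁ c₂ r₁ r₂) := isCompact_Xcl c₁ c₂ r₁ r₂
  have hcont : ∀ j k : Fin 2, ContinuousOn (fun z => F z j k) (Xcl c₁ c₂ r₁ r₂) :=
    fun j k => ((hd j k).continuousOn).mono hXU
  obtain ⟨M, hM1, hMb⟩ : ∃ M : ℝ, 1 ≤ M ∧
      ∀ z ∈ Xcl c₁ c₂ r₁ r₂, ∀ j k : Fin 2, ‖F z j k‖ ≤ M := by
    obtain ⟨M00, h00⟩ := hXcomp.exists_bound_of_continuousOn (hcont 0 0)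
    obtain ⟨M01, h01⟩ := hXcomp.exists_bound_of_continuousOn (hcont 0 1)
    obtain ⟨M10, h10⟩ := hXcomp.exists_bound_of_continuousOn (hcont 1 0)
    obtain ⟨M11, h11⟩ := hXcomp.exists_bound_of_continuousOn (hcont 1 1)
    have n00 := abs_nonneg M00; have n01 := abs_nonneg M01
    have n10 := abs_nonneg M10; have n11 := abs_nonneg M11
    have l00 := le_abs_self M00; have l01 := le_abs_self M01
    have l10 := le_abs_self M10; have l11 := le_abs_self M11
    refine ⟨1 + (|M00| + |M01| + |M10| + |M11|), by linarith, ?_⟩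
    intro z hz j k
    have b00 := h00 z hz; have b01 := h01 z hz
    have b10 := h10 z hz; have b11 := h11 z hz
    fin_cases j <;> fin_cases k
    · exact b00.trans (by linarith)
    · exact b01.trans (by linarith)
    · exact b10.trans (by linarith)
    · exact b11.trans (by linarith)
  have hM0 : (0:ℝ) < M := lt_of_lt_of_le one_pos hM1
  obtain ⟨ρ, hρpos, hρM⟩ : ∃ ρ : ℝ, 0 < ρ ∧ 2 * ρ * (2 * M) = 1 := by
    refine ⟨1 / (4 * M), by positivity, ?_⟩
    field_simp
    ring
  have hbnd : ∀ u : ℂ, ‖u‖ ≤ 2 * M → ‖2*(ρ:ℂ)*u‖ ≤ 1 := by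
    intro u hu
    have he : ‖2*(ρ:ℂ)*u‖ = 2 * ρ * ‖u‖ := by
      rw [norm_mul, norm_mul, Complex.norm_two, Complex.norm_real, Real.norm_eq_abs, abs_of_pos hρpos]
    rw [he]
    have h1 : 2 * ρ * ‖u‖ ≤ 2 * ρ * (2 * M) :=
      mul_le_mul_of_nonneg_left hu (by positivity)
    linarith
  refine ⟨ρ, hρpos, 12, ![
      fun z => 2*(ρ:ℂ)*(F z 0 0 + F z 1 0),
      fun z => 2*(ρ:ℂ)*(F z 0 0 + F z 1 0),
      fun z => 2*(ρ:ℂ)*(F z 0 0 - F z 1 0),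
      fun z => 2*(ρ:ℂ)*(F z 0 0 - F z 1 0),
      fun _ => 0,
      fun z => 2*(ρ:ℂ)*(F z 0 1 + F z 1 1),
      fun z => 2*(ρ:ℂ)*(F z 0 1 + F z 1 1),
      fun z => 2*(ρ:ℂ)*(F z 0 1 - F z 1 1),
      fun z => 2*(ρ:ℂ)*(F z 0 1 - F z 1 1),
      fun _ => 0, fun _ => 0, fun _ => 0], ![
      fun _ => !![1/4, 0; 1/4, 0],
      fun _ => !![1/4, 0; 1/4, 0],
      fun _ => !![1/4, 0; -(1/4), 0],
      fun _ => !![1/4, 0; -(1/4), 0],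
      fun z => !![(ρ:ℂ) * F z 1 0, 0; (ρ:ℂ) * F z 0 0, 0],
      fun _ => !![1/4, 0; 1/4, 0],
      fun _ => !![1/4, 0; 1/4, 0],
      fun _ => !![1/4, 0; -(1/4), 0],
      fun _ => !![1/4, 0; -(1/4), 0],
      fun z => !![(ρ:ℂ) * F z 1 1, 0; (ρ:ℂ) * F z 0 1, 0],
      fun _ => !![1/2, 0; 0, 1/2],
      fun _ => !![1/2, 0; 0, 1/2]], ?_, ?_, ?_, ?_⟩
  · -- ψ holomorphic
    intro i
    refine ⟨U, hUo, hXU, ?_⟩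
    fin_cases i <;>
      first
        | exact differentiableOn_const 0
        | exact ((hd 0 0).add (hd 1 0)).const_mul _
        | exact ((hd 0 0).sub (hd 1 0)).const_mul _
        | exact ((hd 0 1).add (hd 1 1)).const_mul _
        | exact ((hd 0 1).sub (hd 1 1)).const_mul _
  · -- |ψ| ≤ 1
    intro i z hz
    have b00 := hMb z hz 0 0; have b01 := hMb z hz 0 1
    have b10 := hMb z hz 1 0; have b11 := hMb z hz 1 1
    fin_cases i
    · show ‖2*(ρ:ℂ)*(F z 0 0 + F z 1 0)‖ ≤ 1
      exact hbnd _ ((norm_add_le _ _).trans (by linarith))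
    · show ‖2*(ρ:ℂ)*(F z 0 0 + F z 1 0)‖ ≤ 1
      exact hbnd _ ((norm_add_le _ _).trans (by linarith))
    · show ‖2*(ρ:ℂ)*(F z 0 0 - F z 1 0)‖ ≤ 1
      exact hbnd _ ((norm_sub_le _ _).trans (by linarith))
    · show ‖2*(ρ:ℂ)*(F z 0 0 - F z 1 0)‖ ≤ 1
      exact hbnd _ ((norm_sub_le _ _).trans (by linarith))
    · show ‖(0:ℂ)‖ ≤ 1
      simp
    · show ‖2*(ρ:ℂ)*(F z 0 1 + F z 1 1)‖ ≤ 1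
      exact hbnd _ ((norm_add_le _ _).trans (by linarith))
    · show ‖2*(ρ:ℂ)*(F z 0 1 + F z 1 1)‖ ≤ 1
      exact hbnd _ ((norm_add_le _ _).trans (by linarith))
    · show ‖2*(ρ:ℂ)*(F z 0 1 - F z 1 1)‖ ≤ 1
      exact hbnd _ ((norm_sub_le _ _).trans (by linarith))
    · show ‖2*(ρ:ℂ)*(F z 0 1 - F z 1 1)‖ ≤ 1
      exact hbnd _ ((norm_sub_le _ _).trans (by linarith))
    · show ‖(0:ℂ)‖ ≤ 1
      simp
    · show ‖(0:ℂ)‖ ≤ 1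
      simp
    · show ‖(0:ℂ)‖ ≤ 1
      simp
  · -- H holomorphic
    intro i
    refine ⟨U, hUo, hXU, ?_⟩
    intro j k
    fin_cases i <;> fin_cases j <;> fin_cases k <;>
      first
        | exact differentiableOn_const _
        | exact (hd 1 0).const_mul _
        | exact (hd 0 0).const_mul _
        | exact (hd 1 1).const_mul _
        | exact (hd 0 1).const_mul _
  · -- the identity
    intro z _ w _
    apply Matrix.ext
    intro j l
    fin_cases j <;> fin_cases l <;>
      simp [Fin.sum_univ_succ, Matrix.sum_apply, Matrix.sub_apply, Matrix.smul_apply,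
        Matrix.one_apply, Matrix.mul_apply, Matrix.conjTranspose_apply, Fin.sum_univ_two,
        smul_eq_mul, map_add, map_sub, map_mul, map_ofNat, map_div₀, map_one,
        Complex.conj_ofReal] <;> ring

end
end

section
/- Let 𝒜 ⊆ C(X, ℂ) be the closure, in the supremum norm, of the algebra of restrictions to X of rational functions with poles off X (functions p/q with p, q polynomials and q nonvanishing on X). Let Λ ⊆ R be a finite set and let γ : 𝒜 → B(K) be a unital algebra homomorphism into the bounded operators on a complex Hilbert space K such that γ(f) = 0 whenever f ∈ 𝒜 vanishes at every point of Λ. Then there exist idempotent operators (E_λ)_{λ∈Λ} in B(K) such that E_λ E_μ = 0 for λ ≠ μ, Σ_{λ∈Λ} E_λ = I, and γ(f) E_λ = f(λ) E_λ for every f ∈ 𝒜 and every λ ∈ Λ; consequently K is the algebraic direct sum of the closed subspaces E_λ K, on each of which γ(f) acts as multiplication by f(λ). -/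
noncomputable section

open scoped ComplexConjugate Matrix

/-- The set of restrictions to `X` of rational functions with poles off `X`, inside `C(X, ℂ)`. -/
def RatFns (c₁ c₂ r₁ r₂ : ℝ) : Set C(Xcl c₁ c₂ r₁ r₂, ℂ) :=
  {f | ∃ p q : Polynomial ℂ, (∀ z ∈ Xcl c₁ c₂ r₁ r₂, q.eval z ≠ 0) ∧
    ∀ z : Xcl c₁ c₂ r₁ r₂, f z = p.eval (z : ℂ) / q.eval (z : ℂ)}

/-- The algebra `𝒜`: the sup-norm closure of `RatFns` in `C(X, ℂ)`. -/
def Acl (c₁ c₂ r₁ r₂ : ℝ) : Set C(Xcl c₁ c₂ r₁ r₂, ℂ) := closure (RatFns c₁ c₂ r₁ r₂)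

/-- Under the standing assumptions, `X` coincides with the closed region
`{|z| ≤ 1, |z − c₁| ≥ r₁, |z − c₂| ≥ r₂}`. -/
lemma Xcl_eq (c₁ c₂ r₁ r₂ : ℝ) (h : GoodParams c₁ c₂ r₁ r₂) :
    Xcl c₁ c₂ r₁ r₂ = {z : ℂ | ‖z‖ ≤ 1 ∧ r₁ ≤ ‖z - (c₁ : ℂ)‖ ∧
      r₂ ≤ ‖z - (c₂ : ℂ)‖} := by
  obtain ⟨h1, h2, h3, h4, h5, h6, h7, h8⟩ := h
  have hc1 : |c₁| < 1 := abs_lt.2 ⟨h1, h2.trans zero_lt_one⟩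
  have hc2 : |c₂| < 1 := abs_lt.2 ⟨lt_trans (by linarith) h3, h4⟩
  have hr1a : r₁ < |c₁| := lt_of_lt_of_le h6 (min_le_left _ _)
  have hr1b : r₁ < 1 - |c₁| := lt_of_lt_of_le h6 (min_le_right _ _)
  have hr2a : r₂ < |c₂| := lt_of_lt_of_le h8 (min_le_left _ _)
  have hr2b : r₂ < 1 - |c₂| := lt_of_lt_of_le h8 (min_le_right _ _)
  have habs1 : ‖(c₁ : ℂ)‖ = |c₁| := by rw [Complex.norm_real, Real.norm_eq_abs]
  have habs2 : ‖(c₂ : ℂ)‖ = |c₂| := by rw [Complex.norm_real, Real.norm_eq_abs]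
  have hdist : ‖(c₂ : ℂ) - (c₁ : ℂ)‖ = |c₂| + |c₁| := by
    rw [← Complex.ofReal_sub, Complex.norm_real, Real.norm_eq_abs, abs_of_pos (by linarith),
      abs_of_pos h3, abs_of_neg h2]
    ring
  ext z
  constructor
  · rintro (⟨ha, hb, hc⟩ | ((hz | hz) | hz))
    · exact ⟨ha.le, hb.le, hc.le⟩
    · -- on the outer circle
      refine ⟨hz.le, ?_, ?_⟩
      · have := norm_sub_norm_le z (c₁ : ℂ)
        rw [hz, habs1] at this
        linarith
      · have := norm_sub_norm_le z (c₂ : ℂ)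
        rw [hz, habs2] at this
        linarith
    · -- on circle 1
      have htri : ‖z‖ ≤ ‖z - (c₁ : ℂ)‖ + ‖(c₁ : ℂ)‖ := by
        simpa using norm_add_le (z - (c₁ : ℂ)) (c₁ : ℂ)
      have htri2 : ‖(c₂ : ℂ) - (c₁ : ℂ)‖ ≤
          ‖(c₂ : ℂ) - z‖ + ‖z - (c₁ : ℂ)‖ :=
        norm_sub_le_norm_sub_add_norm_sub _ _ _
      rw [hdist, hz] at htri2
      rw [hz, habs1] at htri
      refine ⟨by linarith, hz.ge, ?_⟩
      rw [norm_sub_rev]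
      linarith
    · -- on circle 2
      have htri : ‖z‖ ≤ ‖z - (c₂ : ℂ)‖ + ‖(c₂ : ℂ)‖ := by
        simpa using norm_add_le (z - (c₂ : ℂ)) (c₂ : ℂ)
      have htri2 : ‖(c₂ : ℂ) - (c₁ : ℂ)‖ ≤
          ‖(c₂ : ℂ) - z‖ + ‖z - (c₁ : ℂ)‖ :=
        norm_sub_le_norm_sub_add_norm_sub _ _ _
      rw [hdist, norm_sub_rev (c₂ : ℂ) z, hz] at htri2
      rw [hz, habs2] at htri
      exact ⟨by linarith, by linarith, hz.ge⟩
  · rintro ⟨ha, hb, hc⟩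
    by_cases hA : ‖z‖ = 1
    · exact Or.inr (Or.inl (Or.inl hA))
    by_cases hB : ‖z - (c₁ : ℂ)‖ = r₁
    · exact Or.inr (Or.inl (Or.inr hB))
    by_cases hC : ‖z - (c₂ : ℂ)‖ = r₂
    · exact Or.inr (Or.inr hC)
    · exact Or.inl ⟨lt_of_le_of_ne ha hA, lt_of_le_of_ne hb (Ne.symm hB),
        lt_of_le_of_ne hc (Ne.symm hC)⟩

/-- `X` is compact. -/
lemma Xcl_compact (c₁ c₂ r₁ r₂ : ℝ) (h : GoodParams c₁ c₂ r₁ r₂) :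
    IsCompact (Xcl c₁ c₂ r₁ r₂) := by
  rw [Xcl_eq c₁ c₂ r₁ r₂ h]
  apply Metric.isCompact_of_isClosed_isBounded
  · have : {z : ℂ | ‖z‖ ≤ 1 ∧ r₁ ≤ ‖z - (c₁ : ℂ)‖ ∧
        r₂ ≤ ‖z - (c₂ : ℂ)‖} =
        {z : ℂ | ‖z‖ ≤ 1} ∩ ({z : ℂ | r₁ ≤ ‖z - (c₁ : ℂ)‖} ∩
          {z : ℂ | r₂ ≤ ‖z - (c₂ : ℂ)‖}) := rfl
    rw [this]
    exact (isClosed_le continuous_norm continuous_const).inter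
      ((isClosed_le continuous_const (continuous_norm.comp (by fun_prop))).inter
        (isClosed_le continuous_const (continuous_norm.comp (by fun_prop))))
  · refine Metric.isBounded_closedBall (x := (0 : ℂ)) (r := 1) |>.subset ?_
    intro z hz
    simp only [Metric.mem_closedBall, Complex.dist_eq, sub_zero]
    exact hz.1

/-- `RatFns` as a subalgebra of `C(X, ℂ)`. -/
def RatSub (c₁ c₂ r₁ r₂ : ℝ) : Subalgebra ℂ C(Xcl c₁ c₂ r₁ r₂, ℂ) where
  carrier := RatFns c₁ c₂ r₁ r₂
  mul_mem' := by
    rintro f g ⟨p, q, hq, hf⟩ ⟨p', q', hq', hg⟩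
    refine ⟨p * p', q * q', fun z hz => by
      rw [Polynomial.eval_mul]; exact mul_ne_zero (hq z hz) (hq' z hz), fun z => ?_⟩
    simp only [ContinuousMap.mul_apply, hf z, hg z, Polynomial.eval_mul]
    rw [div_mul_div_comm]
  add_mem' := by
    rintro f g ⟨p, q, hq, hf⟩ ⟨p', q', hq', hg⟩
    refine ⟨p * q' + p' * q, q * q', fun z hz => by
      rw [Polynomial.eval_mul]; exact mul_ne_zero (hq z hz) (hq' z hz), fun z => ?_⟩
    simp only [ContinuousMap.add_apply, hf z, hg z, Polynomial.eval_add, Polynomial.eval_mul]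
    rw [div_add_div _ _ (hq z z.2) (hq' z z.2)]
    congr 1
    ring
  algebraMap_mem' := by
    intro c
    exact ⟨Polynomial.C c, 1, fun z hz => by simp, fun z => by simp⟩

/-- A polynomial as an element of `C(X, ℂ)`. -/
def polyC (c₁ c₂ r₁ r₂ : ℝ) (p : Polynomial ℂ) : C(Xcl c₁ c₂ r₁ r₂, ℂ) :=
  ⟨fun z => p.eval (z : ℂ), p.continuous.comp continuous_subtype_val⟩

lemma polyC_mem (c₁ c₂ r₁ r₂ : ℝ) (p : Polynomial ℂ) :
    polyC c₁ c₂ r₁ r₂ p ∈ RatSub c₁ c₂ r₁ r₂ :=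
  ⟨p, 1, fun z _ => by simp, fun z => by simp [polyC]⟩

lemma basis_eval_self (Λ : Finset ℂ) {l : ℂ} (hl : l ∈ Λ) :
    (Lagrange.basis Λ id l).eval l = 1 :=
  Lagrange.eval_basis_self (Set.injOn_id _) hl

lemma basis_eval_ne (Λ : Finset ℂ) {l μ : ℂ} (h : l ≠ μ) (hμ : μ ∈ Λ) :
    (Lagrange.basis Λ id l).eval μ = 0 :=
  Lagrange.eval_basis_of_ne (v := id) h hμ

/-- If `γ` is a unital homomorphism of `𝒜` into `B(K)` annihilating every
function vanishing on the finite set `Λ ⊆ R`, then there are idempotents `E_λ` with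
`E_λ E_μ = 0` for `λ ≠ μ`, `Σ E_λ = I`, and `γ(f) E_λ = f(λ) E_λ`; consequently `K` decomposes
as the algebraic direct sum of the ranges of the `E_λ`, on which `γ(f)` acts as `f(λ)`. -/
theorem spectral_idempotents (c₁ c₂ r₁ r₂ : ℝ) (h : GoodParams c₁ c₂ r₁ r₂)
    (Λ : Finset ℂ) (hΛ : (Λ : Set ℂ) ⊆ Rdom c₁ c₂ r₁ r₂)
    {K : Type*} [NormedAddCommGroup K] [InnerProductSpace ℂ K] [CompleteSpace K]
    (γ : C(Xcl c₁ c₂ r₁ r₂, ℂ) → (K →L[ℂ] K))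
    -- `γ` is a unital algebra homomorphism on `𝒜`
    (hone : γ 1 = 1)
    (hadd : ∀ f ∈ Acl c₁ c₂ r₁ r₂, ∀ g ∈ Acl c₁ c₂ r₁ r₂, γ (f + g) = γ f + γ g)
    (hmul : ∀ f ∈ Acl c₁ c₂ r₁ r₂, ∀ g ∈ Acl c₁ c₂ r₁ r₂, γ (f * g) = γ f * γ g)
    (hsmul : ∀ (c : ℂ), ∀ f ∈ Acl c₁ c₂ r₁ r₂, γ (c • f) = c • γ f)
    -- `γ` annihilates functions vanishing on `Λ`
    (hvanish : ∀ f ∈ Acl c₁ c₂ r₁ r₂,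
      (∀ l ∈ Λ, ∀ hl : l ∈ Xcl c₁ c₂ r₁ r₂, f ⟨l, hl⟩ = 0) → γ f = 0) :
    ∃ E : ℂ → (K →L[ℂ] K),
      (∀ l ∈ Λ, E l * E l = E l) ∧
      (∀ l ∈ Λ, ∀ l2 ∈ Λ, l ≠ l2 → E l * E l2 = 0) ∧
      (∑ l ∈ Λ, E l = 1) ∧
      (∀ x : K, ∑ l ∈ Λ, E l x = x) ∧
      (∀ f ∈ Acl c₁ c₂ r₁ r₂, ∀ l ∈ Λ, ∀ hl : l ∈ Xcl c₁ c₂ r₁ r₂,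
        γ f ∘L E l = f ⟨l, hl⟩ • E l) := by
  classical
  haveI : CompactSpace (Xcl c₁ c₂ r₁ r₂) :=
    isCompact_iff_compactSpace.mp (Xcl_compact c₁ c₂ r₁ r₂ h)
  set A := (RatSub c₁ c₂ r₁ r₂).topologicalClosure with hA
  have hmem : ∀ f : C(Xcl c₁ c₂ r₁ r₂, ℂ), f ∈ Acl c₁ c₂ r₁ r₂ ↔ f ∈ A := by
    intro f
    rw [← SetLike.mem_coe, Subalgebra.topologicalClosure_coe]
    exact Iff.rfl
  -- transported hypotheses
  have hadd' : ∀ f ∈ A, ∀ g ∈ A, γ (f + g) = γ f + γ g := fun f hf g hg =>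
    hadd f ((hmem f).2 hf) g ((hmem g).2 hg)
  have hmul' : ∀ f ∈ A, ∀ g ∈ A, γ (f * g) = γ f * γ g := fun f hf g hg =>
    hmul f ((hmem f).2 hf) g ((hmem g).2 hg)
  have hsmul' : ∀ (c : ℂ), ∀ f ∈ A, γ (c • f) = c • γ f := fun c f hf =>
    hsmul c f ((hmem f).2 hf)
  have hvanish' : ∀ f ∈ A,
      (∀ l ∈ Λ, ∀ hl : l ∈ Xcl c₁ c₂ r₁ r₂, f ⟨l, hl⟩ = 0) → γ f = 0 := fun f hf =>
    hvanish f ((hmem f).2 hf)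
  -- the interpolating functions
  set e : ℂ → C(Xcl c₁ c₂ r₁ r₂, ℂ) := fun l => polyC c₁ c₂ r₁ r₂ (Lagrange.basis Λ id l)
    with he_def
  have he : ∀ l, e l ∈ A := fun l =>
    (RatSub c₁ c₂ r₁ r₂).le_topologicalClosure (polyC_mem c₁ c₂ r₁ r₂ _)
  have heval : ∀ (l μ : ℂ) (hμ : μ ∈ Xcl c₁ c₂ r₁ r₂),
      e l ⟨μ, hμ⟩ = (Lagrange.basis Λ id l).eval μ := fun _ _ _ => rfl
  -- γ 0 = 0
  have h0 : γ 0 = 0 := by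
    have h := hadd' 0 (zero_mem A) 0 (zero_mem A)
    rw [add_zero] at h
    exact (left_eq_add.mp h)
  -- subtraction trick
  have hdiff : ∀ f ∈ A, ∀ g ∈ A, γ f = γ (f - g) + γ g := by
    intro f hf g hg
    have h := hadd' (f - g) (sub_mem hf hg) g hg
    rw [sub_add_cancel] at h
    exact h
  -- the sum of the idempotents is the identity
  have hsum_mem : ∀ s : Finset ℂ, (∑ l ∈ s, e l) ∈ A := fun s =>
    sum_mem fun l _ => he l
  have hγsum : ∀ s : Finset ℂ, γ (∑ l ∈ s, e l) = ∑ l ∈ s, γ (e l) := by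
    intro s
    induction s using Finset.induction with
    | empty => simpa using h0
    | insert _ _ hns ih =>
      rw [Finset.sum_insert hns, Finset.sum_insert hns, hadd' _ (he _) _ (hsum_mem _), ih]
  have hv1 : γ ((∑ l ∈ Λ, e l) - 1) = 0 := by
    refine hvanish' _ (sub_mem (hsum_mem Λ) (one_mem A)) ?_
    intro μ hμ hμX
    simp only [ContinuousMap.sub_apply, ContinuousMap.sum_apply, ContinuousMap.one_apply, heval]
    rw [Finset.sum_eq_single_of_mem μ hμ (fun b _ hb => basis_eval_ne Λ hb hμ),
      basis_eval_self Λ hμ, sub_self]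
  have hsum1 : (∑ l ∈ Λ, γ (e l)) = 1 :=
    calc (∑ l ∈ Λ, γ (e l)) = γ (∑ l ∈ Λ, e l) := (hγsum Λ).symm
      _ = γ ((∑ l ∈ Λ, e l) - 1) + γ 1 := hdiff _ (hsum_mem Λ) _ (one_mem A)
      _ = 1 := by rw [hv1, hone, zero_add]
  refine ⟨fun l => γ (e l), ?_, ?_, hsum1, ?_, ?_⟩
  · -- idempotency
    intro l hl
    have hv : γ (e l * e l - e l) = 0 := by
      refine hvanish' _ (sub_mem (mul_mem (he l) (he l)) (he l)) ?_
      intro μ hμ hμX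
      simp only [ContinuousMap.sub_apply, ContinuousMap.mul_apply, heval]
      by_cases hlm : l = μ
      · subst hlm; rw [basis_eval_self Λ hl]; ring
      · rw [basis_eval_ne Λ hlm hμ]; ring
    calc γ (e l) * γ (e l) = γ (e l * e l) := (hmul' _ (he l) _ (he l)).symm
      _ = γ (e l * e l - e l) + γ (e l) := hdiff _ (mul_mem (he l) (he l)) _ (he l)
      _ = γ (e l) := by rw [hv, zero_add]
  · -- orthogonality
    intro l hl l2 hl2 hne
    have hv : γ (e l * e l2) = 0 := by
      refine hvanish' _ (mul_mem (he l) (he l2)) ?_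
      intro μ hμ hμX
      simp only [ContinuousMap.mul_apply, heval]
      by_cases hlm : l = μ
      · subst hlm
        rw [basis_eval_ne Λ (fun hh => hne hh.symm) hμ, mul_zero]
      · rw [basis_eval_ne Λ hlm hμ, zero_mul]
    rw [← hmul' _ (he l) _ (he l2), hv]
  · -- pointwise sum
    intro x
    calc (∑ l ∈ Λ, γ (e l) x) = (∑ l ∈ Λ, γ (e l)) x := by
          rw [ContinuousLinearMap.sum_apply]
      _ = x := by rw [hsum1]; rfl
  · -- action of γ f
    intro f hf l hl hlX
    have hfA : f ∈ A := (hmem f).1 hf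
    have hv : γ (f * e l - f ⟨l, hlX⟩ • e l) = 0 := by
      refine hvanish' _ (sub_mem (mul_mem hfA (he l)) (SMulMemClass.smul_mem _ (he l))) ?_
      intro μ hμ hμX
      simp only [ContinuousMap.sub_apply, ContinuousMap.mul_apply, ContinuousMap.smul_apply,
        smul_eq_mul, heval]
      by_cases hlm : l = μ
      · have hpt : (⟨μ, hμX⟩ : Xcl c₁ c₂ r₁ r₂) = ⟨l, hlX⟩ := Subtype.ext hlm.symm
        rw [hpt]
        ring
      · rw [basis_eval_ne Λ hlm hμ]; ring
    have hc : γ f ∘L γ (e l) = γ f * γ (e l) := rfl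
    rw [hc]
    calc γ f * γ (e l) = γ (f * e l) := (hmul' _ hfA _ (he l)).symm
      _ = γ (f * e l - f ⟨l, hlX⟩ • e l) + γ (f ⟨l, hlX⟩ • e l) :=
          hdiff _ (mul_mem hfA (he l)) _ (SMulMemClass.smul_mem _ (he l))
      _ = f ⟨l, hlX⟩ • γ (e l) := by rw [hv, hsmul' _ _ (he l), zero_add]

end
end

section
/- Suppose F : R → M₂(ℂ) is holomorphic and det F is not identically zero on R. Suppose there exist a unitary 2×2 matrix U and holomorphic scalar functions ψ₁, ψ₂ : R → ℂ such that, with D(z) = diag(ψ₁(z), ψ₂(z)), one has F(z) F(w)* = U D(z) D(w)* U* for all z, w ∈ R. Then there exists a constant unitary 2×2 matrix V such that F(z) = U D(z) V for all z ∈ R. -/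
noncomputable section

open scoped ComplexConjugate Matrix

/-- If `F` is holomorphic on `R` with `det F` not identically zero and
`F(z)F(w)* = U D(z) D(w)* U*` for a fixed unitary `U` and a holomorphic diagonal
`D = diag(ψ₁, ψ₂)`, then `F = U D V` for some fixed unitary `V`. -/
theorem diagonalizable_of_product_form (c₁ c₂ r₁ r₂ : ℝ) (h : GoodParams c₁ c₂ r₁ r₂)
    (F : ℂ → Matrix (Fin 2) (Fin 2) ℂ)
    (hF : ∀ j k : Fin 2, DifferentiableOn ℂ (fun z => F z j k) (Rdom c₁ c₂ r₁ r₂))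
    (hdet : ¬ ∀ z ∈ Rdom c₁ c₂ r₁ r₂, (F z).det = 0)
    (U : Matrix (Fin 2) (Fin 2) ℂ) (hU : U ∈ Matrix.unitaryGroup (Fin 2) ℂ)
    (ψ₁ ψ₂ : ℂ → ℂ)
    (hψ₁ : DifferentiableOn ℂ ψ₁ (Rdom c₁ c₂ r₁ r₂))
    (hψ₂ : DifferentiableOn ℂ ψ₂ (Rdom c₁ c₂ r₁ r₂))
    (hprod : ∀ z ∈ Rdom c₁ c₂ r₁ r₂, ∀ w ∈ Rdom c₁ c₂ r₁ r₂,
      F z * (F w)ᴴ =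
        U * (Matrix.diagonal ![ψ₁ z, ψ₂ z]) * (Matrix.diagonal ![ψ₁ w, ψ₂ w])ᴴ * Uᴴ) :
    ∃ V : Matrix (Fin 2) (Fin 2) ℂ, V ∈ Matrix.unitaryGroup (Fin 2) ℂ ∧
      ∀ z ∈ Rdom c₁ c₂ r₁ r₂, F z = U * (Matrix.diagonal ![ψ₁ z, ψ₂ z]) * V := by
  classical
  push_neg at hdet
  obtain ⟨z₀, hz₀, hdetz₀⟩ := hdet
  set D : ℂ → Matrix (Fin 2) (Fin 2) ℂ := fun z => Matrix.diagonal ![ψ₁ z, ψ₂ z] with hDdef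
  have hU1 : U * Uᴴ = 1 := by
    simpa [Matrix.star_eq_conjTranspose] using (Matrix.mem_unitaryGroup_iff).mp hU
  have hU2 : Uᴴ * U = 1 := by
    simpa [Matrix.star_eq_conjTranspose] using (Matrix.mem_unitaryGroup_iff').mp hU
  set G : ℂ → Matrix (Fin 2) (Fin 2) ℂ := fun z => Uᴴ * F z with hGdef
  have hG : ∀ z ∈ Rdom c₁ c₂ r₁ r₂, ∀ w ∈ Rdom c₁ c₂ r₁ r₂,
      G z * (G w)ᴴ = D z * (D w)ᴴ := by
    intro z hz w hw
    have hp := hprod z hz w hw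
    have : G z * (G w)ᴴ = Uᴴ * (F z * (F w)ᴴ) * U := by
      simp only [hGdef, Matrix.conjTranspose_mul, Matrix.conjTranspose_conjTranspose,
        Matrix.mul_assoc]
    rw [this, hp]
    simp only [← Matrix.mul_assoc]
    rw [hU2, Matrix.one_mul, Matrix.mul_assoc, hU2, Matrix.mul_one]
  have e0 := hG z₀ hz₀ z₀ hz₀
  have hdetG : (G z₀).det ≠ 0 := by
    have hdetU : Uᴴ.det * U.det = 1 := by rw [← Matrix.det_mul, hU2, Matrix.det_one]
    have hUne : Uᴴ.det ≠ 0 := left_ne_zero_of_mul_eq_one hdetU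
    simp only [hGdef, Matrix.det_mul]
    exact mul_ne_zero hUne hdetz₀
  have hdetGH : ((G z₀)ᴴ).det ≠ 0 := by
    rw [Matrix.det_conjTranspose]
    exact star_ne_zero.mpr hdetG
  have hdetD : (D z₀).det ≠ 0 := by
    intro hzero
    have := congrArg Matrix.det e0
    simp only [Matrix.det_mul] at this
    rw [hzero, zero_mul] at this
    exact mul_ne_zero hdetG hdetGH this
  have hdetDH : ((D z₀)ᴴ).det ≠ 0 := by
    rw [Matrix.det_conjTranspose]
    exact star_ne_zero.mpr hdetD
  have huD : IsUnit (D z₀).det := isUnit_iff_ne_zero.mpr hdetD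
  have huDH : IsUnit ((D z₀)ᴴ).det := isUnit_iff_ne_zero.mpr hdetDH
  have huGH : IsUnit ((G z₀)ᴴ).det := isUnit_iff_ne_zero.mpr hdetGH
  refine ⟨(D z₀)⁻¹ * G z₀, ?_, ?_⟩
  · rw [Matrix.mem_unitaryGroup_iff, Matrix.star_eq_conjTranspose]
    have expand : ((D z₀)⁻¹ * G z₀) * ((D z₀)⁻¹ * G z₀)ᴴ
        = (D z₀)⁻¹ * (G z₀ * (G z₀)ᴴ) * ((D z₀)ᴴ)⁻¹ := by
      rw [Matrix.conjTranspose_mul, Matrix.conjTranspose_nonsing_inv]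
      simp only [Matrix.mul_assoc]
    rw [expand, e0, ← Matrix.mul_assoc, Matrix.nonsing_inv_mul _ huD, Matrix.one_mul,
      Matrix.mul_nonsing_inv _ huDH]
  · intro z hz
    have e1 := hG z hz z₀ hz₀
    have h3 : (D z₀)⁻¹ * G z₀ = (D z₀)ᴴ * ((G z₀)ᴴ)⁻¹ := by
      rw [← Matrix.mul_nonsing_inv_cancel_right ((G z₀)ᴴ) ((D z₀)⁻¹ * G z₀) huGH,
        Matrix.mul_assoc ((D z₀)⁻¹) (G z₀) ((G z₀)ᴴ), e0, ← Matrix.mul_assoc,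
        Matrix.nonsing_inv_mul _ huD, Matrix.one_mul]
    have key : G z = D z * ((D z₀)⁻¹ * G z₀) := by
      rw [h3, ← Matrix.mul_assoc, ← e1,
        Matrix.mul_nonsing_inv_cancel_right _ _ huGH]
    have hFG : F z = U * G z := by
      rw [hGdef, ← Matrix.mul_assoc, hU1, Matrix.one_mul]
    rw [hFG, key, ← Matrix.mul_assoc]


end
end
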